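/- For R ≥ 2 and 1 ≤ M ≤ R, the number of pairs (x, y) ∈ ℤ² × ℤ² with ‖x‖ = ‖y‖ ≤ R and 0 < ‖x − y‖ < M is O(M·R·log R). -/

import Mathlib

open Finset

namespace Stmt5Aux

def tOf (v w : ℤ × ℤ) : ℤ := if w.1 ≠ 0 then v.2 / w.1 else -(v.1 / w.2)

def Phi (p : (ℤ × ℤ) × (ℤ × ℤ)) : ℤ × (ℤ × ℤ) × ℤ :=
  let g : ℤ := Int.gcd (p.1.1 - p.2.1) (p.1.2 - p.2.2)
  let w : ℤ × ℤ := ((p.1.1 - p.2.1) / g, (p.1.2 - p.2.2) / g)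
  (g, w, tOf (p.1.1 + p.2.1, p.1.2 + p.2.2) w)

lemma decomp (x y : ℤ × ℤ) (hne : x ≠ y) (hE : x.1 ^ 2 + x.2 ^ 2 = y.1 ^ 2 + y.2 ^ 2) :
    ∃ g w t, Phi (x, y) = (g, w, t) ∧ 1 ≤ g ∧ (1 ≤ |w.1| ∨ 1 ≤ |w.2|) ∧
      x.1 - y.1 = g * w.1 ∧ x.2 - y.2 = g * w.2 ∧
      x.1 + y.1 = -(t * w.2) ∧ x.2 + y.2 = t * w.1 := by
  set u1 : ℤ := x.1 - y.1 with hu1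
  set u2 : ℤ := x.2 - y.2 with hu2
  have hu : u1 ≠ 0 ∨ u2 ≠ 0 := by
    by_contra h
    push_neg at h
    exact hne (Prod.ext (by omega) (by omega))
  have hgpos : 0 < Int.gcd u1 u2 := Int.gcd_pos_iff.mpr hu
  set g : ℤ := (Int.gcd u1 u2 : ℤ) with hg
  have hg0 : 0 < g := by rw [hg]; exact_mod_cast hgpos
  set w1 : ℤ := u1 / g with hw1
  set w2 : ℤ := u2 / g with hw2
  have hgw1 : g * w1 = u1 := Int.mul_ediv_cancel' (Int.gcd_dvd_left u1 u2)
  have hgw2 : g * w2 = u2 := Int.mul_ediv_cancel' (Int.gcd_dvd_right u1 u2)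
  have hcop : IsCoprime w1 w2 :=
    Int.isCoprime_iff_gcd_eq_one.mpr (Int.gcd_div_gcd_div_gcd hgpos)
  have hwne : w1 ≠ 0 ∨ w2 ≠ 0 := by
    rcases hu with h | h
    · left; intro h0; exact h (by rw [← hgw1, h0, mul_zero])
    · right; intro h0; exact h (by rw [← hgw2, h0, mul_zero])
  set v1 : ℤ := x.1 + y.1 with hv1
  set v2 : ℤ := x.2 + y.2 with hv2
  have huperp : u1 * v1 + u2 * v2 = 0 := by
    simp only [hu1, hu2, hv1, hv2]; linear_combination hE
  have hperp : w1 * v1 + w2 * v2 = 0 := by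
    have : g * (w1 * v1 + w2 * v2) = 0 := by
      rw [mul_add, ← mul_assoc, ← mul_assoc, hgw1, hgw2, huperp]
    exact (mul_eq_zero.mp this).resolve_left (by omega)
  obtain ⟨a, b, hab⟩ := hcop
  set t0 : ℤ := a * v2 - b * v1 with ht0
  have h1 : v2 = t0 * w1 := by linear_combination (-v2) * hab + b * hperp
  have h2 : v1 = -(t0 * w2) := by linear_combination (-v1) * hab + a * hperp
  have htof : tOf (v1, v2) (w1, w2) = t0 := by
    unfold tOf
    split_ifs with hc
    · rw [h1, Int.mul_ediv_cancel t0 hc]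
    · push_neg at hc
      have hw2ne : w2 ≠ 0 := hwne.resolve_left (by simpa using hc)
      rw [h2, show -(t0 * w2) = (-t0) * w2 by ring, Int.mul_ediv_cancel (-t0) hw2ne]
      ring
  have habs : 1 ≤ |w1| ∨ 1 ≤ |w2| := by
    rcases hwne with h | h
    · exact Or.inl (Int.one_le_abs h)
    · exact Or.inr (Int.one_le_abs h)
  refine ⟨g, (w1, w2), t0, ?_, by omega, habs, hgw1.symm, hgw2.symm, h2, h1⟩
  unfold Phi
  simp only [← hu1, ← hu2, ← hg, ← hw1, ← hw2, ← hv1, ← hv2]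
  rw [htof]


lemma shell_card (k : ℤ) (hk : 1 ≤ k) :
    ((((Finset.Icc (-k) k ×ˢ Finset.Icc (-k) k).filter
        (fun w : ℤ × ℤ => max |w.1| |w.2| = k)).card : ℕ) : ℝ) ≤ 8 * (k : ℝ) := by
  set big : Finset (ℤ × ℤ) := Finset.Icc (-k) k ×ˢ Finset.Icc (-k) k with hbig
  set small : Finset (ℤ × ℤ) := Finset.Icc (-(k-1)) (k-1) ×ˢ Finset.Icc (-(k-1)) (k-1) with hsmall
  have hss : small ⊆ big :=
    Finset.product_subset_product (Finset.Icc_subset_Icc (by omega) (by omega))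
      (Finset.Icc_subset_Icc (by omega) (by omega))
  have hsub : (big.filter (fun w : ℤ × ℤ => max |w.1| |w.2| = k)) ⊆ big \ small := by
    intro w hw
    rw [Finset.mem_filter] at hw
    rw [Finset.mem_sdiff]
    refine ⟨hw.1, fun hsm => ?_⟩
    rw [hsmall, Finset.mem_product, Finset.mem_Icc, Finset.mem_Icc] at hsm
    have h1 : |w.1| ≤ k - 1 := abs_le.mpr ⟨hsm.1.1, hsm.1.2⟩
    have h2 : |w.2| ≤ k - 1 := abs_le.mpr ⟨hsm.2.1, hsm.2.2⟩
    have h3 := max_le h1 h2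
    omega
  obtain ⟨m, hm⟩ : ∃ m : ℕ, k = (m : ℤ) + 1 := ⟨(k - 1).toNat, by omega⟩
  have hnat : (big.filter (fun w : ℤ × ℤ => max |w.1| |w.2| = k)).card ≤ 8 * (m + 1) := by
    calc (big.filter (fun w : ℤ × ℤ => max |w.1| |w.2| = k)).card
        ≤ (big \ small).card := Finset.card_le_card hsub
      _ = big.card - small.card := Finset.card_sdiff_of_subset hss
      _ ≤ 8 * (m + 1) := by
          rw [hbig, hsmall, Finset.card_product, Finset.card_product,
            Int.card_Icc, Int.card_Icc]
          have e1 : (k + 1 - -k).toNat = 2 * m + 3 := by omega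
          have e2 : (k - 1 + 1 - -(k-1)).toNat = 2 * m + 1 := by omega
          rw [e1, e2]
          have h : (2*m+3) * (2*m+3) = (2*m+1)*(2*m+1) + 8*(m+1) := by ring
          exact le_of_eq (by rw [h, Nat.add_sub_cancel_left])
  calc ((big.filter (fun w : ℤ × ℤ => max |w.1| |w.2| = k)).card : ℝ)
      ≤ ((8 * (m+1) : ℕ) : ℝ) := by exact_mod_cast hnat
    _ = 8 * (k : ℝ) := by rw [hm]; push_cast; ring

lemma tset_card (R : ℝ) (k : ℤ) (hk : 1 ≤ k) (hkR : (k : ℝ) ≤ R) :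
    ((Finset.Icc (-(⌊2*R/(k:ℝ)⌋)) ⌊2*R/(k:ℝ)⌋).card : ℝ) ≤ 5 * R / (k : ℝ) := by
  have hk0 : (0:ℝ) < (k:ℝ) := by exact_mod_cast hk
  have hR0 : (0:ℝ) < R := lt_of_lt_of_le hk0 hkR
  set B : ℤ := ⌊2*R/(k:ℝ)⌋ with hB
  have hB0 : 0 ≤ B := by rw [hB]; exact Int.floor_nonneg.mpr (by positivity)
  have hBle : (B:ℝ) ≤ 2*R/(k:ℝ) := Int.floor_le _
  have hBle' : (B:ℝ) * (k:ℝ) ≤ 2*R := by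
    rw [← le_div_iff₀ hk0]; exact hBle
  have ecard : ((Finset.Icc (-B) B).card : ℝ) = 2*(B:ℝ)+1 := by
    rw [Int.card_Icc, show B + 1 - -B = 2*B+1 by ring,
      show ((2*B+1).toNat : ℝ) = (((2*B+1).toNat : ℤ) : ℝ) by push_cast; ring,
      Int.toNat_of_nonneg (by omega)]
    push_cast; ring
  rw [ecard, le_div_iff₀ hk0]
  nlinarith
  
lemma sum_inv_le (n : ℕ) (hn : 1 ≤ n) :
    ∑ g ∈ Finset.Icc (1:ℤ) (n:ℤ), ((g:ℝ))⁻¹ ≤ 1 + Real.log n := by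
  have himg : Finset.Icc (1:ℤ) (n:ℤ) = (Finset.Icc (1:ℕ) n).image (fun g : ℕ => (g:ℤ)) := by
    ext a
    simp only [Finset.mem_Icc, Finset.mem_image]
    constructor
    · intro h; exact ⟨a.toNat, by omega, by omega⟩
    · rintro ⟨b, hb, rfl⟩; omega
  rw [himg, Finset.sum_image (by intro a _ b _ h; exact Nat.cast_injective h)]
  have : ∑ g ∈ Finset.Icc (1:ℕ) n, (((g:ℤ):ℝ))⁻¹ = ((harmonic n : ℚ) : ℝ) := by
    rw [harmonic_eq_sum_Icc]
    push_cast
    rfl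
  rw [this]
  exact harmonic_le_one_add_log n

end Stmt5Aux



set_option maxHeartbeats 1000000 in
open Stmt5Aux in
/-- For `R ≥ 2` and `1 ≤ M ≤ R`, the number of ordered pairs `(x, y)` of integer
lattice points in the plane with `‖x‖ = ‖y‖ ≤ R` and `0 < ‖x − y‖ < M` is `O(M R log R)`. -/
theorem stmt_5 : ∃ C : ℝ, 0 < C ∧ ∀ R M : ℝ, 2 ≤ R → 1 ≤ M → M ≤ R →
    (Set.ncard {p : (ℤ × ℤ) × (ℤ × ℤ) |
        p.1.1 ^ 2 + p.1.2 ^ 2 = p.2.1 ^ 2 + p.2.2 ^ 2 ∧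
        ((p.1.1 ^ 2 + p.1.2 ^ 2 : ℤ) : ℝ) ≤ R ^ 2 ∧
        p.1 ≠ p.2 ∧
        (((p.1.1 - p.2.1) ^ 2 + (p.1.2 - p.2.2) ^ 2 : ℤ) : ℝ) < M ^ 2} : ℝ)
      ≤ C * M * R * Real.log R := by
  refine ⟨1000, by norm_num, ?_⟩
  intro R M hR2 hM1 hMR
  have hR0 : (0:ℝ) < R := by linarith
  have hM0 : (0:ℝ) < M := by linarith
  set S : Set ((ℤ × ℤ) × (ℤ × ℤ)) := {p : (ℤ × ℤ) × (ℤ × ℤ) |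
        p.1.1 ^ 2 + p.1.2 ^ 2 = p.2.1 ^ 2 + p.2.2 ^ 2 ∧
        ((p.1.1 ^ 2 + p.1.2 ^ 2 : ℤ) : ℝ) ≤ R ^ 2 ∧
        p.1 ≠ p.2 ∧
        (((p.1.1 - p.2.1) ^ 2 + (p.1.2 - p.2.2) ^ 2 : ℤ) : ℝ) < M ^ 2} with hS
  set N : ℤ := ⌊M⌋ with hN
  have hN1 : 1 ≤ N := by rw [hN]; exact Int.le_floor.mpr (by norm_num [hM1])
  have hNM : (N:ℝ) ≤ M := Int.floor_le M
  set n : ℕ := N.toNat with hn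
  have hnN : (n:ℤ) = N := Int.toNat_of_nonneg (by omega)
  have hn1 : 1 ≤ n := by omega
  have hnM : (n:ℝ) ≤ M := by
    have : ((n:ℤ):ℝ) ≤ M := by rw [hnN]; exact hNM
    exact_mod_cast this
  set shell : ℤ → Finset (ℤ × ℤ) := fun k =>
    (Finset.Icc (-k) k ×ˢ Finset.Icc (-k) k).filter (fun w : ℤ × ℤ => max |w.1| |w.2| = k)
    with hshell
  set tset : ℤ → Finset ℤ := fun k =>
    Finset.Icc (-(⌊2*R/(k:ℝ)⌋)) ⌊2*R/(k:ℝ)⌋ with htset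
  set F : Finset (ℤ × (ℤ × ℤ) × ℤ) :=
    (Finset.Icc 1 (n:ℤ)).biUnion (fun g =>
      (Finset.Icc 1 ((n:ℤ)/g)).biUnion (fun k => {g} ×ˢ shell k ×ˢ tset k)) with hF
  -- injectivity
  have hinj : Set.InjOn Phi S := by
    intro p hp q hq hPQ
    rw [hS, Set.mem_setOf_eq] at hp hq
    obtain ⟨g, w, t, eP, _, _, p1, p2, p3, p4⟩ := decomp p.1 p.2 hp.2.2.1 hp.1
    obtain ⟨g', w', t', eQ, _, _, q1, q2, q3, q4⟩ := decomp q.1 q.2 hq.2.2.1 hq.1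
    have eP' : Phi p = (g, w, t) := eP
    have eQ' : Phi q = (g', w', t') := eQ
    rw [eP', eQ'] at hPQ
    obtain ⟨h1, h2, h3⟩ : g = g' ∧ w = w' ∧ t = t' := by
      simpa [Prod.ext_iff] using hPQ
    subst h1; subst h2; subst h3
    have a1 := p1.trans q1.symm
    have a2 := p2.trans q2.symm
    have a3 := p3.trans q3.symm
    have a4 := p4.trans q4.symm
    exact Prod.ext (Prod.ext (by omega) (by omega)) (Prod.ext (by omega) (by omega))
  -- image in F
  have himg : Phi '' S ⊆ ↑F := by
    rintro _ ⟨p, hp, rfl⟩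
    rw [hS, Set.mem_setOf_eq] at hp
    obtain ⟨hE, hxR, hne, hM2⟩ := hp
    obtain ⟨g, w, t, ePhi, hg1, habs, e1, e2, e3, e4⟩ := decomp p.1 p.2 hne hE
    have ePhi' : Phi p = (g, w, t) := ePhi
    rw [ePhi']
    set k : ℤ := max |w.1| |w.2| with hk
    have hk1 : 1 ≤ k := by
      rcases habs with h | h
      · exact le_trans h (le_max_left _ _)
      · exact le_trans h (le_max_right _ _)
    have hksq : k^2 ≤ w.1^2 + w.2^2 := by
      rcases max_cases |w.1| |w.2| with ⟨h, _⟩ | ⟨h, _⟩ <;> rw [hk, h] <;>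
        nlinarith [sq_abs w.1, sq_abs w.2, sq_nonneg w.1, sq_nonneg w.2]
    have husq : (p.1.1 - p.2.1)^2 + (p.1.2 - p.2.2)^2 = g^2 * (w.1^2 + w.2^2) := by
      rw [e1, e2]; ring
    have hvsq : (p.1.1 + p.2.1)^2 + (p.1.2 + p.2.2)^2 = t^2 * (w.1^2 + w.2^2) := by
      rw [e3, e4]; ring
    have hgk2 : (g*k)^2 ≤ (p.1.1 - p.2.1)^2 + (p.1.2 - p.2.2)^2 := by
      rw [husq]
      nlinarith [mul_le_mul_of_nonneg_left hksq (sq_nonneg g)]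
    have hgk0 : (0:ℤ) < g * k := mul_pos (by omega) (by omega)
    have hgkM : ((g*k : ℤ):ℝ) < M := by
      have h2 : (((g*k : ℤ):ℝ))^2 < M^2 := by
        calc (((g*k : ℤ):ℝ))^2 = (((g*k)^2 : ℤ) : ℝ) := by push_cast; ring
          _ ≤ (((p.1.1 - p.2.1)^2 + (p.1.2 - p.2.2)^2 : ℤ) : ℝ) := by exact_mod_cast hgk2
          _ < M^2 := hM2
      have h3 : (0:ℝ) < ((g*k : ℤ):ℝ) := by exact_mod_cast hgk0
      nlinarith [h2, h3]
    have hgkN : g * k ≤ N := by rw [hN]; exact Int.le_floor.mpr hgkM.le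
    have hgmem : g ∈ Finset.Icc 1 (n:ℤ) := by
      rw [Finset.mem_Icc]
      refine ⟨hg1, ?_⟩
      have : g * 1 ≤ g * k := mul_le_mul_of_nonneg_left hk1 (by omega)
      rw [hnN]; linarith [hgkN]
    have hkmem : k ∈ Finset.Icc 1 ((n:ℤ)/g) := by
      rw [Finset.mem_Icc]
      refine ⟨hk1, (Int.le_ediv_iff_mul_le (by omega)).mpr ?_⟩
      rw [hnN, mul_comm]; exact hgkN
    have hwmem : w ∈ shell k := by
      rw [hshell]
      simp only [Finset.mem_filter, Finset.mem_product, Finset.mem_Icc]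
      have h1 := abs_le.mp (le_max_left |w.1| |w.2|)
      have h2 := abs_le.mp (le_max_right |w.1| |w.2|)
      exact ⟨⟨⟨h1.1, h1.2⟩, ⟨h2.1, h2.2⟩⟩, hk.symm⟩
    have htmem : t ∈ tset k := by
      have hv4 : (((p.1.1 + p.2.1)^2 + (p.1.2 + p.2.2)^2 : ℤ) : ℝ) ≤ 4 * R^2 := by
        have hint : (p.1.1 + p.2.1)^2 + (p.1.2 + p.2.2)^2 ≤ 4 * (p.1.1^2 + p.1.2^2) := by
          nlinarith [hE, sq_nonneg (p.1.1 - p.2.1), sq_nonneg (p.1.2 - p.2.2)]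
        calc (((p.1.1 + p.2.1)^2 + (p.1.2 + p.2.2)^2 : ℤ) : ℝ)
            ≤ ((4 * (p.1.1^2 + p.1.2^2) : ℤ) : ℝ) := by exact_mod_cast hint
          _ ≤ 4 * R^2 := by push_cast; push_cast at hxR; linarith
      have htk2 : (|t| * k)^2 ≤ (p.1.1 + p.2.1)^2 + (p.1.2 + p.2.2)^2 := by
        rw [hvsq]
        nlinarith [sq_abs t, mul_le_mul_of_nonneg_left hksq (sq_nonneg t)]
      have h0 : (0:ℤ) ≤ |t| * k := mul_nonneg (abs_nonneg t) (by omega)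
      have htkR : ((|t| * k : ℤ) : ℝ) ≤ 2 * R := by
        have hc : (((|t| * k : ℤ) : ℝ))^2 ≤ (2*R)^2 := by
          calc (((|t| * k : ℤ) : ℝ))^2 = (((|t| * k)^2 : ℤ) : ℝ) := by push_cast; ring
            _ ≤ (((p.1.1 + p.2.1)^2 + (p.1.2 + p.2.2)^2 : ℤ) : ℝ) := by exact_mod_cast htk2
            _ ≤ (2*R)^2 := by nlinarith [hv4]
        have h00 : (0:ℝ) ≤ ((|t| * k : ℤ) : ℝ) := by exact_mod_cast h0
        nlinarith [hc, h00, hR0]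
      have hk0R : (0:ℝ) < (k:ℝ) := by exact_mod_cast hk1
      have htfloor : |t| ≤ ⌊2*R/(k:ℝ)⌋ := by
        apply Int.le_floor.mpr
        rw [le_div_iff₀ hk0R]
        calc ((|t| : ℤ) : ℝ) * (k:ℝ) = ((|t| * k : ℤ) : ℝ) := by push_cast; ring
          _ ≤ 2 * R := htkR
      rw [htset]
      simp only [Finset.mem_Icc]
      have := abs_le.mp htfloor
      exact ⟨this.1, this.2⟩
    rw [Finset.mem_coe, hF, Finset.mem_biUnion]
    refine ⟨g, hgmem, ?_⟩
    rw [Finset.mem_biUnion]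
    refine ⟨k, hkmem, ?_⟩
    rw [Finset.mem_product, Finset.mem_product]
    exact ⟨Finset.mem_singleton_self g, hwmem, htmem⟩
  -- counting F
  have hcard1 : F.card ≤ ∑ g ∈ Finset.Icc 1 (n:ℤ), ∑ k ∈ Finset.Icc 1 ((n:ℤ)/g),
      (shell k).card * (tset k).card := by
    rw [hF]
    refine le_trans Finset.card_biUnion_le (Finset.sum_le_sum fun g _ => ?_)
    refine le_trans Finset.card_biUnion_le (Finset.sum_le_sum fun k _ => ?_)
    apply le_of_eq
    simp [Finset.card_product]
  have hterm : ∀ g ∈ Finset.Icc 1 (n:ℤ), ∀ k ∈ Finset.Icc 1 ((n:ℤ)/g),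
      (((shell k).card * (tset k).card : ℕ) : ℝ) ≤ 40 * R := by
    intro g hg k hkk
    rw [Finset.mem_Icc] at hg hkk
    have hk1 : 1 ≤ k := hkk.1
    have hkn : k ≤ (n:ℤ) := le_trans hkk.2 (Int.ediv_le_self _ (by omega))
    have hkR : (k:ℝ) ≤ R := by
      have h1 : ((k:ℤ):ℝ) ≤ ((n:ℤ):ℝ) := by exact_mod_cast hkn
      push_cast at h1
      linarith [hnM, hMR]
    have hk0R : (0:ℝ) < (k:ℝ) := by exact_mod_cast hk1
    have h1 : ((shell k).card : ℝ) ≤ 8 * (k:ℝ) := by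
      rw [hshell]; exact shell_card k hk1
    have h2 : ((tset k).card : ℝ) ≤ 5 * R / (k:ℝ) := by
      rw [htset]; exact tset_card R k hk1 hkR
    calc (((shell k).card * (tset k).card : ℕ) : ℝ)
        = ((shell k).card : ℝ) * ((tset k).card : ℝ) := by push_cast; ring
      _ ≤ (8 * (k:ℝ)) * (5 * R / (k:ℝ)) := by
          apply mul_le_mul h1 h2 (by positivity) (by positivity)
      _ = 40 * R := by field_simp; ring
  have hcard2 : (F.card : ℝ) ≤ ∑ g ∈ Finset.Icc 1 (n:ℤ), ((n:ℝ)/(g:ℝ)) * (40*R) := by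
    calc (F.card : ℝ)
        ≤ ((∑ g ∈ Finset.Icc 1 (n:ℤ), ∑ k ∈ Finset.Icc 1 ((n:ℤ)/g),
            (shell k).card * (tset k).card : ℕ) : ℝ) := by exact_mod_cast hcard1
      _ = ∑ g ∈ Finset.Icc 1 (n:ℤ), ∑ k ∈ Finset.Icc 1 ((n:ℤ)/g),
            (((shell k).card * (tset k).card : ℕ) : ℝ) := by push_cast; rfl
      _ ≤ ∑ g ∈ Finset.Icc 1 (n:ℤ), ((n:ℝ)/(g:ℝ)) * (40*R) := by
          apply Finset.sum_le_sum
          intro g hg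
          have hg' := Finset.mem_Icc.mp hg
          have hg0R : (0:ℝ) < (g:ℝ) := by exact_mod_cast hg'.1
          have hsum := Finset.sum_le_card_nsmul (Finset.Icc 1 ((n:ℤ)/g))
            (fun k => (((shell k).card * (tset k).card : ℕ) : ℝ)) (40*R) (hterm g hg)
          rw [nsmul_eq_mul] at hsum
          have hq0 : (0:ℤ) ≤ (n:ℤ)/g := Int.ediv_nonneg (by omega) (by omega)
          have hcardIcc : ((Finset.Icc 1 ((n:ℤ)/g)).card : ℝ) ≤ (n:ℝ)/(g:ℝ) := by
            rw [Int.card_Icc, show (n:ℤ)/g + 1 - 1 = (n:ℤ)/g by ring]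
            rw [show ((((n:ℤ)/g).toNat : ℕ) : ℝ) = ((((n:ℤ)/g).toNat : ℤ) : ℝ) by push_cast; ring,
              Int.toNat_of_nonneg hq0]
            rw [le_div_iff₀ hg0R]
            have hmul : ((n:ℤ)/g) * g ≤ (n:ℤ) := Int.ediv_mul_le _ (by omega)
            calc (((n:ℤ)/g : ℤ) : ℝ) * (g:ℝ) = ((((n:ℤ)/g) * g : ℤ) : ℝ) := by push_cast; ring
              _ ≤ ((n:ℤ):ℝ) := by exact_mod_cast hmul
              _ = (n:ℝ) := by push_cast; ring
          calc ∑ k ∈ Finset.Icc 1 ((n:ℤ)/g), (((shell k).card * (tset k).card : ℕ) : ℝ)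
              ≤ ((Finset.Icc 1 ((n:ℤ)/g)).card : ℝ) * (40*R) := hsum
            _ ≤ ((n:ℝ)/(g:ℝ)) * (40*R) := by
                apply mul_le_mul_of_nonneg_right hcardIcc (by positivity)
  have hcard3 : ∑ g ∈ Finset.Icc 1 (n:ℤ), ((n:ℝ)/(g:ℝ)) * (40*R)
      = (40*R*(n:ℝ)) * ∑ g ∈ Finset.Icc 1 (n:ℤ), ((g:ℝ))⁻¹ := by
    rw [Finset.mul_sum]
    apply Finset.sum_congr rfl
    intro g _
    rw [div_eq_mul_inv]; ring
  have hharm : ∑ g ∈ Finset.Icc (1:ℤ) (n:ℤ), ((g:ℝ))⁻¹ ≤ 1 + Real.log n :=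
    sum_inv_le n hn1
  -- assemble
  have hmain : (S.ncard : ℝ) ≤ (40*R*(n:ℝ)) * (1 + Real.log n) := by
    calc (S.ncard : ℝ) = ((Phi '' S).ncard : ℝ) := by rw [Set.ncard_image_of_injOn hinj]
      _ ≤ (F.card : ℝ) := by
          have h := Set.ncard_le_ncard himg F.finite_toSet
          rw [Set.ncard_coe_finset] at h
          exact_mod_cast h
      _ ≤ ∑ g ∈ Finset.Icc 1 (n:ℤ), ((n:ℝ)/(g:ℝ)) * (40*R) := hcard2
      _ = (40*R*(n:ℝ)) * ∑ g ∈ Finset.Icc 1 (n:ℤ), ((g:ℝ))⁻¹ := hcard3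
      _ ≤ (40*R*(n:ℝ)) * (1 + Real.log n) := by
          apply mul_le_mul_of_nonneg_left hharm (by positivity)
  -- final numeric estimate
  have hn0R : (1:ℝ) ≤ (n:ℝ) := by exact_mod_cast hn1
  have hlogn0 : 0 ≤ Real.log n := Real.log_nonneg hn0R
  have hlogn : Real.log n ≤ Real.log R := Real.log_le_log (by linarith) (by linarith [hnM, hMR])
  have hlog2 : (0.6931471803:ℝ) < Real.log 2 := Real.log_two_gt_d9
  have hlogR2 : Real.log 2 ≤ Real.log R := Real.log_le_log (by norm_num) hR2
  have hlogR0 : 0 ≤ Real.log R := by linarith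
  have h1 : (1:ℝ) + Real.log n ≤ 2.5 * Real.log R := by nlinarith
  calc (S.ncard : ℝ) ≤ (40*R*(n:ℝ)) * (1 + Real.log n) := hmain
    _ ≤ (40*R*M) * (2.5 * Real.log R) := by
        apply mul_le_mul (by nlinarith) h1 (by linarith) (by positivity)
    _ ≤ 1000 * M * R * Real.log R := by nlinarith [mul_nonneg (mul_nonneg hM0.le hR0.le) hlogR0]
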